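/- Suppose v is a vertex in a forest F of order n. If ⌈(n+1)/(α_v+1)⌉ > 3, then v is the unique vertex of maximum degree Δ(F); i.e., deg(v) > deg(x) for every other vertex x. -/
import Mathlib


open SimpleGraph Finset

variable {V : Type*}

/-- A stable (independent) set of vertices. -/
def IsStable (G : SimpleGraph V) (S : Finset V) : Prop :=
  ∀ x ∈ S, ∀ y ∈ S, ¬G.Adj x y

/-- Stability (independence) number. -/
noncomputable def stabNum (G : SimpleGraph V) [Fintype V] : ℕ :=
  sSup {n | ∃ S : Finset V, IsStable G S ∧ S.card = n}

/-- `x`-stability number: max size of a stable set containing `x`. -/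
noncomputable def stabNumAt (G : SimpleGraph V) [Fintype V] (x : V) : ℕ :=
  sSup {n | ∃ S : Finset V, IsStable G S ∧ x ∈ S ∧ S.card = n}

/-- Stability number of the subgraph induced on a vertex set `s`. -/
noncomputable def stabNumOn (G : SimpleGraph V) (s : Set V) : ℕ :=
  sSup {n | ∃ S : Finset V, ↑S ⊆ s ∧ IsStable G S ∧ S.card = n}

/-- `G` admits an equitable `k`-coloring. -/
def EquitablyColorable (G : SimpleGraph V) [Fintype V] (k : ℕ) : Prop :=
  ∃ c : V → Fin k, (∀ a b, G.Adj a b → c a ≠ c b) ∧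
    ∀ i j : Fin k,
      (Finset.univ.filter fun v => c v = i).card ≤
        (Finset.univ.filter fun v => c v = j).card + 1

/-- Equitable chromatic number. -/
noncomputable def eqChromNum (G : SimpleGraph V) [Fintype V] : ℕ :=
  sInf {k | EquitablyColorable G k}

lemma IsStable.insert' [DecidableEq V] {F : SimpleGraph V} {S : Finset V} {u : V}
    (hS : IsStable F S) (h : ∀ y ∈ S, ¬F.Adj u y) : IsStable F (insert u S) := by
  intro a ha b hb hadj
  rw [Finset.mem_insert] at ha hb
  obtain rfl | ha := ha
  · obtain rfl | hb := hb
    · exact F.irrefl hadj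
    · exact h b hb hadj
  · obtain rfl | hb := hb
    · exact h a ha hadj.symm
    · exact hS a ha b hb hadj

/-- In a finite forest, every nonempty vertex set contains a vertex with at most
one neighbor inside the set. -/
lemma forest_exists_leaf [Fintype V] (F : SimpleGraph V) [DecidableRel F.Adj]
    (hF : F.IsAcyclic) (s : Finset V) (hs : s.Nonempty) :
    ∃ u ∈ s, (s.filter (F.Adj u)).card ≤ 1 := by
  classical
  by_contra hcon
  push_neg at hcon
  have key : ∀ k : ℕ, ∃ (b a : V) (p : F.Walk b a), p.IsPath ∧
      (∀ x ∈ p.support, x ∈ s) ∧ p.length = k := by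
    intro k
    induction k with
    | zero =>
      obtain ⟨u, hu⟩ := hs
      exact ⟨u, u, Walk.nil, Walk.IsPath.nil, by simp [hu], rfl⟩
    | succ k ih =>
      obtain ⟨b, a, p, hp, hsup, hlen⟩ := ih
      have hb : b ∈ s := hsup b p.start_mem_support
      have h2 : 2 ≤ (s.filter (F.Adj b)).card := hcon b hb
      have hw : ∃ w ∈ s.filter (F.Adj b), w ∉ p.support := by
        by_contra hall
        push_neg at hall
        cases p with
        | nil =>
          have hne : (s.filter (F.Adj b)).Nonempty := by
            rw [← Finset.card_pos]; omega
          obtain ⟨w, hwmem⟩ := hne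
          have := hall w hwmem
          simp only [Walk.support_nil, List.mem_singleton] at this
          subst this
          exact F.irrefl (Finset.mem_filter.mp hwmem).2
        | @cons _ c _ h' q =>
          obtain ⟨w1, hw1, w2, hw2, h12⟩ :=
            Finset.one_lt_card.mp (by omega : 1 < (s.filter (F.Adj b)).card)
          have hex : ∃ w ∈ s.filter (F.Adj b), w ≠ c := by
            by_cases h1c : w1 = c
            · refine ⟨w2, hw2, fun h2c => h12 ?_⟩
              rw [h1c, h2c]
            · exact ⟨w1, hw1, h1c⟩
          obtain ⟨w, hwf, hwc⟩ := hex
          have hbw : F.Adj b w := (Finset.mem_filter.mp hwf).2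
          have hwsup := hall w hwf
          rw [Walk.support_cons, List.mem_cons] at hwsup
          rcases hwsup with rfl | hwq
          · exact F.irrefl hbw
          · -- w in the support of q : Walk c a; build two distinct paths b → w
            have hqpath : q.IsPath := hp.of_cons
            have hbq : b ∉ q.support := ((Walk.cons_isPath_iff h' q).mp hp).2
            set r := q.takeUntil w hwq with hr
            have hrpath : r.IsPath := hqpath.takeUntil hwq
            have hbr : b ∉ r.support := fun hmem => hbq (Walk.support_takeUntil_subset q hwq hmem)
            have hp1 : (Walk.cons h' r).IsPath := (Walk.cons_isPath_iff h' r).mpr ⟨hrpath, hbr⟩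
            have heq := hF.path_unique ⟨Walk.cons h' r, hp1⟩ (SimpleGraph.Path.singleton hbw)
            have hlen' := congrArg (fun p : F.Path b w => p.1.length) heq
            simp only [SimpleGraph.Path.singleton, Walk.length_cons, Walk.length_nil] at hlen'
            have : r.length = 0 := by omega
            exact hwc (Walk.eq_of_length_eq_zero this).symm
      obtain ⟨w, hwmem, hwns⟩ := hw
      rw [Finset.mem_filter] at hwmem
      refine ⟨w, a, Walk.cons hwmem.2.symm p, ?_, ?_, ?_⟩
      · exact (Walk.cons_isPath_iff _ p).mpr ⟨hp, hwns⟩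
      · intro x hx
        rw [Walk.support_cons, List.mem_cons] at hx
        rcases hx with rfl | hx
        · exact hwmem.1
        · exact hsup x hx
      · simp [hlen]
  obtain ⟨b, a, p, hp, -, hlen⟩ := key (Fintype.card V)
  have := hp.length_lt
  omega

/-- Any vertex set of a finite forest contains a stable subset of at least half its size. -/
lemma forest_half_stable [Fintype V] (F : SimpleGraph V) [DecidableRel F.Adj]
    (hF : F.IsAcyclic) (s : Finset V) :
    ∃ S : Finset V, S ⊆ s ∧ IsStable F S ∧ s.card ≤ 2 * S.card := by
  classical
  induction s using Finset.strongInduction with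
  | _ s ih =>
    rcases s.eq_empty_or_nonempty with rfl | hs
    · exact ⟨∅, Finset.Subset.refl _, fun x hx => by simp at hx, by simp⟩
    obtain ⟨u, hu, hdeg⟩ := forest_exists_leaf F hF s hs
    set B : Finset V := insert u (s.filter (F.Adj u)) with hB
    have hBs : B ⊆ s := by
      intro x hx
      rcases Finset.mem_insert.mp hx with rfl | hx
      · exact hu
      · exact (Finset.mem_filter.mp hx).1
    have hBcard : B.card ≤ 2 := le_trans (Finset.card_insert_le _ _) (by omega)
    have htss : s \ B ⊂ s := Finset.sdiff_ssubset hBs ⟨u, Finset.mem_insert_self _ _⟩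
    obtain ⟨S, hSt, hSstab, hScard⟩ := ih (s \ B) htss
    have huS : u ∉ S := fun hmem =>
      (Finset.mem_sdiff.mp (hSt hmem)).2 (Finset.mem_insert_self _ _)
    have hnoadj : ∀ y ∈ S, ¬F.Adj u y := by
      intro y hy hadj
      have hys := Finset.mem_sdiff.mp (hSt hy)
      exact hys.2 (Finset.mem_insert_of_mem (Finset.mem_filter.mpr ⟨hys.1, hadj⟩))
    refine ⟨insert u S, ?_, ?_, ?_⟩
    · intro x hx
      rcases Finset.mem_insert.mp hx with rfl | hx
      · exact hu
      · exact (Finset.mem_sdiff.mp (hSt hx)).1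
    · exact hSstab.insert' hnoadj
    · have h1 : s.card ≤ (s \ B).card + B.card := Finset.card_le_card_sdiff_add_card
      have h2 : (insert u S).card = S.card + 1 := Finset.card_insert_of_notMem huS
      omega

lemma le_stabNumAt [Fintype V] (F : SimpleGraph V) {v : V} {S : Finset V}
    (hS : IsStable F S) (hv : v ∈ S) : S.card ≤ stabNumAt F v := by
  apply le_csSup
  · refine ⟨Fintype.card V, ?_⟩
    rintro n ⟨T, -, -, rfl⟩
    exact T.card_le_univ
  · exact ⟨S, hS, hv, rfl⟩

/-- In a forest, the open neighborhood of any vertex is stable. -/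
lemma forest_nbhd_stable [Fintype V] (F : SimpleGraph V) [DecidableRel F.Adj]
    (hF : F.IsAcyclic) (x : V) : IsStable F (F.neighborFinset x) := by
  intro a ha b hb hadj
  rw [SimpleGraph.mem_neighborFinset] at ha hb
  have hax : a ≠ x := ha.symm.ne
  have hxb : x ≠ b := hb.ne
  have hp2 : (Walk.cons ha.symm (Walk.cons hb Walk.nil) : F.Walk a b).IsPath := by
    refine (Walk.cons_isPath_iff _ _).mpr ⟨?_, ?_⟩
    · refine (Walk.cons_isPath_iff _ _).mpr ⟨Walk.IsPath.nil, ?_⟩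
      simp [hxb]
    · simp [hax, hadj.ne]
  have heq := hF.path_unique (SimpleGraph.Path.singleton hadj) ⟨_, hp2⟩
  have := congrArg (fun p : F.Path a b => p.1.length) heq
  simp [SimpleGraph.Path.singleton] at this

/-- In a forest, `α_v` is at least the degree of any other vertex. -/
lemma degree_le_stabNumAt [Fintype V] (F : SimpleGraph V) [DecidableRel F.Adj]
    (hF : F.IsAcyclic) {v x : V} (hxv : x ≠ v) : F.degree x ≤ stabNumAt F v := by
  classical
  have hNstab := forest_nbhd_stable F hF x
  set N := F.neighborFinset x with hN
  by_cases hv : v ∈ N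
  · exact le_stabNumAt F hNstab hv
  · set M := F.neighborFinset v with hM
    have hcap : (N ∩ M).card ≤ 1 := by
      by_contra hc
      push_neg at hc
      obtain ⟨a, ha, b, hb, hab⟩ := Finset.one_lt_card.mp hc
      obtain ⟨haN, haM⟩ := Finset.mem_inter.mp ha
      obtain ⟨hbN, hbM⟩ := Finset.mem_inter.mp hb
      rw [SimpleGraph.mem_neighborFinset] at haN haM hbN hbM
      have hpath : ∀ {c : V} (hxc : F.Adj x c) (hvc : F.Adj v c),
          (Walk.cons hvc (Walk.cons hxc.symm Walk.nil) : F.Walk v x).IsPath := by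
        intro c hxc hvc
        refine (Walk.cons_isPath_iff _ _).mpr ⟨?_, ?_⟩
        · refine (Walk.cons_isPath_iff _ _).mpr ⟨Walk.IsPath.nil, ?_⟩
          simp [hxc.ne']
        · have hvx : v ≠ x := hxv.symm
          simp [hvc.ne, hvx]
      have heq := hF.path_unique ⟨_, hpath haN haM⟩ ⟨_, hpath hbN hbM⟩
      have hsupp := congrArg (fun p : F.Path v x => p.1.support) heq
      simp only [Walk.support_cons, Walk.support_nil, List.cons.injEq, and_true,
        true_and] at hsupp
      exact hab hsupp
    have hvnm : v ∉ N \ M := fun hmem => hv (Finset.mem_sdiff.mp hmem).1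
    have hstab : IsStable F (insert v (N \ M)) := by
      refine IsStable.insert'
        (fun p hp q hq => hNstab p (Finset.mem_sdiff.mp hp).1 q (Finset.mem_sdiff.mp hq).1) ?_
      intro y hy hadj
      exact (Finset.mem_sdiff.mp hy).2 (by rw [hM, SimpleGraph.mem_neighborFinset]; exact hadj)
    have hle := le_stabNumAt F hstab (Finset.mem_insert_self _ _)
    have hcard : (insert v (N \ M)).card = (N \ M).card + 1 :=
      Finset.card_insert_of_notMem hvnm
    have hsd : (N \ M).card = N.card - (N ∩ M).card := by
      rw [← Finset.sdiff_inter_self_left N M]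
      exact Finset.card_sdiff_of_subset (Finset.inter_subset_left)
    have hdeg : F.degree x = N.card := rfl
    have hcapN : (N ∩ M).card ≤ N.card := Finset.card_le_card Finset.inter_subset_left
    omega

/-- Lower bound: `n + 1 ≤ 2 α_v + deg v` in a forest. -/
lemma card_le_stabNumAt_degree [Fintype V] (F : SimpleGraph V) [DecidableRel F.Adj]
    (hF : F.IsAcyclic) (v : V) :
    Fintype.card V + 1 ≤ 2 * stabNumAt F v + F.degree v := by
  classical
  set B : Finset V := insert v (F.neighborFinset v) with hB
  have hvB : v ∉ F.neighborFinset v := by simp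
  have hBcard : B.card = F.degree v + 1 := by
    rw [hB, Finset.card_insert_of_notMem hvB, SimpleGraph.card_neighborFinset_eq_degree]
  set s : Finset V := Finset.univ \ B with hs
  obtain ⟨S, hSs, hSstab, hScard⟩ := forest_half_stable F hF s
  have hvS : v ∉ S := fun hmem =>
    (Finset.mem_sdiff.mp (hSs hmem)).2 (Finset.mem_insert_self _ _)
  have hstab : IsStable F (insert v S) := by
    refine hSstab.insert' ?_
    intro y hy hadj
    exact (Finset.mem_sdiff.mp (hSs hy)).2
      (Finset.mem_insert_of_mem (by rw [SimpleGraph.mem_neighborFinset]; exact hadj))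
  have hstab : IsStable F (insert v S) := hstab
  have hle := le_stabNumAt F hstab (Finset.mem_insert_self _ _)
  have hcardS : (insert v S).card = S.card + 1 := Finset.card_insert_of_notMem hvS
  have hscard : s.card = Fintype.card V - B.card := by
    rw [hs, Finset.card_sdiff_of_subset (Finset.subset_univ _), Finset.card_univ]
  have hBle : B.card ≤ Fintype.card V := Finset.card_le_univ _
  omega

theorem stmt7 [Fintype V] (F : SimpleGraph V) [DecidableRel F.Adj]
    (hF : F.IsAcyclic) (v : V)
    (h : 3 < ⌈((Fintype.card V : ℚ) + 1) / ((stabNumAt F v : ℚ) + 1)⌉) :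
    ∀ x : V, x ≠ v → F.degree x < F.degree v := by
  intro x hxv
  set α := stabNumAt F v with hα
  set n := Fintype.card V with hn
  have hnum : 3 * α + 3 < n + 1 := by
    by_contra hle
    push_neg at hle
    have hleq : ((n : ℚ) + 1) ≤ 3 * ((α : ℚ) + 1) := by
      have : (n : ℚ) + 1 ≤ (3 * α + 3 : ℕ) := by exact_mod_cast (by exact_mod_cast hle)
      push_cast at this
      linarith
    have hpos : (0 : ℚ) < (α : ℚ) + 1 := by positivity
    have hdiv : ((n : ℚ) + 1) / ((α : ℚ) + 1) ≤ 3 := by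
      rw [div_le_iff₀ hpos]
      linarith
    have := Int.ceil_le.mpr (by exact_mod_cast hdiv : ((n : ℚ) + 1) / ((α : ℚ) + 1) ≤ ((3 : ℤ) : ℚ))
    omega
  have h1 : F.degree x ≤ α := degree_le_stabNumAt F hF hxv
  have h2 : n + 1 ≤ 2 * α + F.degree v := card_le_stabNumAt_degree F hF v
  omega
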